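/- Two-point representation of the upper concave envelope of finitely many one-dimensional functions at any point: let f₁,…,f_k : ℝ → ℝ ∪ {-∞} be functions each of which is concave with domain a closed interval, and let F = ⋀_i f_i be their upper concave envelope. Then for every μ in Dom[F], there exist indices i, j, weight t ∈ [0,1], and points μ' ∈ Dom[f_i], μ'' ∈ Dom[f_j] with tμ' + (1-t)μ'' = μ and F(μ) = t f_i(μ') + (1-t) f_j(μ''). -/

import Mathlib

def ConcaveE (g : ℝ → EReal) : Prop :=
  ∀ x y t : ℝ, 0 ≤ t → t ≤ 1 →
    (t : EReal) * g x + ((1 - t : ℝ) : EReal) * g y ≤ g (t * x + (1 - t) * y)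

/-- Upper concave envelope of an extended-real-valued function. -/
noncomputable def concE (f : ℝ → EReal) : ℝ → EReal :=
  fun μ => ⨅ h : {h : ℝ → EReal // ConcaveE h ∧ ∀ x, f x ≤ h x}, (h : ℝ → EReal) μ


open Set Filter Topology

private lemma exists_theta {x y z : ℝ} (h1 : x ≤ y) (h2 : y ≤ z) :
    ∃ θ : ℝ, 0 ≤ θ ∧ θ ≤ 1 ∧ y = θ * x + (1 - θ) * z := by
  rcases eq_or_lt_of_le (h1.trans h2) with h | h
  · exact ⟨1, zero_le_one, le_refl 1, by linarith⟩
  · have hzx : (0:ℝ) < z - x := by linarith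
    refine ⟨(z - y) / (z - x), div_nonneg (by linarith) hzx.le, ?_, ?_⟩
    · rw [div_le_one hzx]; linarith
    · have hmc : (z - y) / (z - x) * (z - x) = z - y := div_mul_cancel₀ _ (ne_of_gt hzx)
      linear_combination hmc

private lemma merge3 (p q r : ℝ × ℝ) (α β γ : ℝ) (hα : 0 ≤ α) (hβ : 0 ≤ β) (hγ : 0 ≤ γ)
    (hsum : α + β + γ = 1) (θ : ℝ) (hθ0 : 0 ≤ θ) (hθ1 : θ ≤ 1)
    (hmid : q.1 = θ * p.1 + (1 - θ) * r.1) :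
    ∃ u v : ℝ × ℝ, (u = p ∨ u = q ∨ u = r) ∧ (v = p ∨ v = q ∨ v = r) ∧
      ∃ s : ℝ, 0 ≤ s ∧ s ≤ 1 ∧
        s * u.1 + (1 - s) * v.1 = α * p.1 + β * q.1 + γ * r.1 ∧
        α * p.2 + β * q.2 + γ * r.2 ≤ s * u.2 + (1 - s) * v.2 := by
  by_cases hδ : q.2 ≤ θ * p.2 + (1 - θ) * r.2
  · refine ⟨p, r, Or.inl rfl, Or.inr (Or.inr rfl), α + β * θ, by positivity,
      by nlinarith [mul_nonneg hβ (sub_nonneg.mpr hθ1)], ?_, ?_⟩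
    · linear_combination (-β) * hmid + (-r.1) * hsum
    · have h2 := mul_le_mul_of_nonneg_left hδ hβ
      have hs : (α + β + γ) * r.2 = r.2 := by rw [hsum]; ring
      linarith [h2, hs]
  · push_neg at hδ
    by_cases hc : α * (1 - θ) ≤ γ * θ
    · by_cases hθz : θ = 0
      · subst hθz
        have hα0 : α = 0 := le_antisymm (by linarith) hα
        refine ⟨q, r, Or.inr (Or.inl rfl), Or.inr (Or.inr rfl), β, hβ, by linarith, ?_, ?_⟩
        · linear_combination (r.1 - p.1) * hα0 - r.1 * hsum
        · have h0 : α * p.2 = 0 := by rw [hα0]; ring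
          have h0' : α * r.2 = 0 := by rw [hα0]; ring
          have hs : (α + β + γ) * r.2 = r.2 := by rw [hsum]; ring
          linarith [h0, h0', hs]
      · have hθpos : 0 < θ := lt_of_le_of_ne hθ0 (Ne.symm hθz)
        have hq1 : q.1 - r.1 = θ * (p.1 - r.1) := by linear_combination hmid
        refine ⟨q, r, Or.inr (Or.inl rfl), Or.inr (Or.inr rfl), β + α / θ,
          by positivity, ?_, ?_, ?_⟩
        · have h1 : α / θ ≤ α + γ := by
            rw [div_le_iff₀ hθpos]; nlinarith
          linarith
        · have hdiv : (α / θ) * (q.1 - r.1) = α * (p.1 - r.1) := by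
            rw [hq1, ← mul_assoc, div_mul_cancel₀ α hθz]
          linear_combination hdiv - r.1 * hsum
        · have hq2 : θ * (p.2 - r.2) ≤ q.2 - r.2 := by nlinarith
          have hdiv : α * (p.2 - r.2) ≤ (α / θ) * (q.2 - r.2) := by
            have h3 := mul_le_mul_of_nonneg_left hq2 (div_nonneg hα hθ0)
            calc α * (p.2 - r.2) = (α / θ) * (θ * (p.2 - r.2)) := by
                  rw [← mul_assoc, div_mul_cancel₀ α hθz]
            _ ≤ (α / θ) * (q.2 - r.2) := h3
          have hs : (α + β + γ) * r.2 = r.2 := by rw [hsum]; ring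
          linarith [hdiv, hs]
    · push_neg at hc
      have hθ1' : θ < 1 := by
        rcases lt_or_eq_of_le hθ1 with h | h
        · exact h
        · exfalso; rw [h] at hc; nlinarith
      have h1θ : 0 < 1 - θ := by linarith
      have hq1 : q.1 - p.1 = (1 - θ) * (r.1 - p.1) := by linear_combination hmid
      have hmne : (1:ℝ) - θ ≠ 0 := ne_of_gt h1θ
      refine ⟨p, q, Or.inl rfl, Or.inr (Or.inl rfl), α - γ / (1 - θ) * θ, ?_, ?_, ?_, ?_⟩
      · have h1 : γ / (1 - θ) * θ ≤ α := by
          rw [div_mul_eq_mul_div, div_le_iff₀ h1θ]; nlinarith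
        linarith
      · have : 0 ≤ γ / (1 - θ) * θ := mul_nonneg (div_nonneg hγ h1θ.le) hθ0
        linarith
      · have hdiv : (γ / (1 - θ)) * (q.1 - p.1) = γ * (r.1 - p.1) := by
          rw [hq1, ← mul_assoc, div_mul_cancel₀ γ hmne]
        linear_combination θ * hdiv + γ * hmid - q.1 * hsum
      · have hq2 : (1 - θ) * (r.2 - p.2) ≤ q.2 - p.2 := by nlinarith
        have hdiv : γ * (r.2 - p.2) ≤ (γ / (1 - θ)) * (q.2 - p.2) := by
          calc γ * (r.2 - p.2) = (γ / (1 - θ)) * ((1 - θ) * (r.2 - p.2)) := by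
                rw [← mul_assoc, div_mul_cancel₀ γ hmne]
          _ ≤ (γ / (1 - θ)) * (q.2 - p.2) :=
            mul_le_mul_of_nonneg_left hq2 (div_nonneg hγ h1θ.le)
        have h1 := mul_le_mul_of_nonneg_left hdiv hθ0
        have h2 := mul_le_mul_of_nonneg_left hδ.le hγ
        have hs : (α + β + γ) * q.2 = q.2 := by rw [hsum]; ring
        linarith [h1, h2, hs]

private lemma reduce3 (p q r : ℝ × ℝ) (α β γ : ℝ) (hα : 0 ≤ α) (hβ : 0 ≤ β) (hγ : 0 ≤ γ)
    (hsum : α + β + γ = 1) :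
    ∃ u v : ℝ × ℝ, (u = p ∨ u = q ∨ u = r) ∧ (v = p ∨ v = q ∨ v = r) ∧
      ∃ s : ℝ, 0 ≤ s ∧ s ≤ 1 ∧
        s * u.1 + (1 - s) * v.1 = α * p.1 + β * q.1 + γ * r.1 ∧
        α * p.2 + β * q.2 + γ * r.2 ≤ s * u.2 + (1 - s) * v.2 := by
  rcases le_total p.1 q.1 with hpq | hpq
  · rcases le_total q.1 r.1 with hqr | hqr
    · -- p ≤ q ≤ r : q middle
      obtain ⟨θ, h0, h1, hmid⟩ := exists_theta hpq hqr
      exact merge3 p q r α β γ hα hβ hγ hsum θ h0 h1 hmid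
    · rcases le_total p.1 r.1 with hpr | hpr
      · -- p ≤ r ≤ q : r middle; apply merge3 with (p, r, q)
        obtain ⟨θ, h0, h1, hmid⟩ := exists_theta hpr hqr
        obtain ⟨u, v, hu, hv, s, hs0, hs1, hx, hval⟩ :=
          merge3 p r q α γ β hα hγ hβ (by linarith) θ h0 h1 hmid
        exact ⟨u, v, by tauto, by tauto, s, hs0, hs1, by linarith, by linarith⟩
      · -- r ≤ p ≤ q : p middle; merge3 (r, p, q)
        obtain ⟨θ, h0, h1, hmid⟩ := exists_theta hpr hpq
        obtain ⟨u, v, hu, hv, s, hs0, hs1, hx, hval⟩ :=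
          merge3 r p q γ α β hγ hα hβ (by linarith) θ h0 h1 hmid
        exact ⟨u, v, by tauto, by tauto, s, hs0, hs1, by linarith, by linarith⟩
  · rcases le_total q.1 r.1 with hqr | hqr
    · rcases le_total p.1 r.1 with hpr | hpr
      · -- q ≤ p ≤ r : p middle; merge3 (q, p, r)
        obtain ⟨θ, h0, h1, hmid⟩ := exists_theta hpq hpr
        obtain ⟨u, v, hu, hv, s, hs0, hs1, hx, hval⟩ :=
          merge3 q p r β α γ hβ hα hγ (by linarith) θ h0 h1 hmid
        exact ⟨u, v, by tauto, by tauto, s, hs0, hs1, by linarith, by linarith⟩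
      · -- q ≤ r ≤ p : r middle; merge3 (q, r, p)
        obtain ⟨θ, h0, h1, hmid⟩ := exists_theta hqr hpr
        obtain ⟨u, v, hu, hv, s, hs0, hs1, hx, hval⟩ :=
          merge3 q r p β γ α hβ hγ hα (by linarith) θ h0 h1 hmid
        exact ⟨u, v, by tauto, by tauto, s, hs0, hs1, by linarith, by linarith⟩
    · -- r ≤ q ≤ p : q middle; merge3 (r, q, p)
      obtain ⟨θ, h0, h1, hmid⟩ := exists_theta hqr hpq
      obtain ⟨u, v, hu, hv, s, hs0, hs1, hx, hval⟩ :=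
        merge3 r q p γ β α hγ hβ hα (by linarith) θ h0 h1 hmid
      exact ⟨u, v, by tauto, by tauto, s, hs0, hs1, by linarith, by linarith⟩

private lemma hull_three {S : Set (ℝ × ℝ)} {z : ℝ × ℝ} (hz : z ∈ convexHull ℝ S) :
    ∃ p ∈ S, ∃ q ∈ S, ∃ r ∈ S, ∃ α β γ : ℝ, 0 ≤ α ∧ 0 ≤ β ∧ 0 ≤ γ ∧ α + β + γ = 1 ∧
      α • p + β • q + γ • r = z := by
  rw [convexHull_eq_union] at hz
  simp only [Set.mem_iUnion] at hz
  obtain ⟨t, hts, hai, hzt⟩ := hz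
  have hcard : t.card ≤ 3 := by
    have h1 := hai.card_le_finrank_succ
    have h2 : Module.finrank ℝ (vectorSpan ℝ (Set.range ((↑) : t → ℝ × ℝ))) ≤
        Module.finrank ℝ (ℝ × ℝ) := Submodule.finrank_le _
    have h3 : Module.finrank ℝ (ℝ × ℝ) = 2 := by
      simp [Module.finrank_prod, Module.finrank_self]
    rw [Fintype.card_coe] at h1
    omega
  obtain h0 | h1 | h2 | h3 : t.card = 0 ∨ t.card = 1 ∨ t.card = 2 ∨ t.card = 3 := by omega
  · rw [Finset.card_eq_zero] at h0
    subst h0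
    simp [convexHull_empty] at hzt
  · obtain ⟨a, rfl⟩ := Finset.card_eq_one.mp h1
    simp only [Finset.coe_singleton, convexHull_singleton, Set.mem_singleton_iff] at hzt
    subst hzt
    have haS : z ∈ S := hts (by simp)
    exact ⟨z, haS, z, haS, z, haS, 1, 0, 0, zero_le_one, le_refl _, le_refl _, by norm_num,
      by simp⟩
  · obtain ⟨a, b, hab, rfl⟩ := Finset.card_eq_two.mp h2
    rw [Finset.coe_insert, Finset.coe_singleton, convexHull_pair] at hzt
    obtain ⟨u, v, hu, hv, huv, hcombo⟩ := hzt
    have haS : a ∈ S := hts (by simp)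
    have hbS : b ∈ S := hts (by simp)
    exact ⟨a, haS, b, hbS, b, hbS, u, v, 0, hu, hv, le_refl _, by linarith,
      by rw [← hcombo, zero_smul, add_zero]⟩
  · obtain ⟨a, b, c, hab, hac, hbc, rfl⟩ := Finset.card_eq_three.mp h3
    have hcoe : (↑({a, b, c} : Finset (ℝ × ℝ)) : Set (ℝ × ℝ)) = insert a {b, c} := by
      simp
    rw [hcoe, convexHull_insert ⟨b, by simp⟩] at hzt
    rw [mem_convexJoin] at hzt
    obtain ⟨x0, hx0, w, hw, hzw⟩ := hzt
    rw [Set.mem_singleton_iff] at hx0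
    rw [hx0] at hzw
    rw [convexHull_pair] at hw
    obtain ⟨u1, u2, hu1, hu2, hu12, hwcombo⟩ := hw
    obtain ⟨s1, s2, hs1, hs2, hs12, hzcombo⟩ := hzw
    have haS : a ∈ S := hts (by simp)
    have hbS : b ∈ S := hts (by simp)
    have hcS : c ∈ S := hts (by simp)
    refine ⟨a, haS, b, hbS, c, hcS, s1, s2 * u1, s2 * u2, hs1, mul_nonneg hs2 hu1,
      mul_nonneg hs2 hu2, by nlinarith, ?_⟩
    rw [← hzcombo, ← hwcombo, smul_add, smul_smul, smul_smul]
    abel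

private lemma combo_mem {S : Set (ℝ × ℝ)} {p q r : ℝ × ℝ} (hp : p ∈ S) (hq : q ∈ S)
    (hr : r ∈ S) {α β γ : ℝ} (hα : 0 ≤ α) (hβ : 0 ≤ β) (hγ : 0 ≤ γ) (hsum : α + β + γ = 1) :
    α • p + β • q + γ • r ∈ convexHull ℝ S := by
  have hmem := Finset.centerMass_mem_convexHull (Finset.univ : Finset (Fin 3))
    (w := ![α, β, γ]) (z := ![p, q, r])
    (by intro i _; fin_cases i <;> simpa)
    (by rw [Fin.sum_univ_three]; simp only [Matrix.cons_val_zero, Matrix.cons_val_one,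
        Matrix.head_cons, Matrix.cons_val_two, Matrix.tail_cons]; linarith)
    (by intro i _; fin_cases i <;> simpa)
  have heq : (Finset.univ : Finset (Fin 3)).centerMass ![α, β, γ] ![p, q, r] =
      α • p + β • q + γ • r := by
    rw [Finset.centerMass, Fin.sum_univ_three, Fin.sum_univ_three]
    simp only [Matrix.cons_val_zero, Matrix.cons_val_one, Matrix.head_cons,
      Matrix.cons_val_two, Matrix.tail_cons]
    rw [hsum]
    simp
  rwa [heq] at hmem

private lemma hull_compact {S : Set (ℝ × ℝ)} (hS : IsCompact S) :
    IsCompact (convexHull ℝ S) := by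
  classical
  set Δ : Set (ℝ × ℝ × ℝ) := {w | 0 ≤ w.1 ∧ 0 ≤ w.2.1 ∧ 0 ≤ w.2.2 ∧ w.1 + w.2.1 + w.2.2 = 1}
    with hΔ
  have hΔcl : IsClosed Δ := by
    have h1 : IsClosed {w : ℝ × ℝ × ℝ | 0 ≤ w.1} := isClosed_le continuous_const continuous_fst
    have h2 : IsClosed {w : ℝ × ℝ × ℝ | 0 ≤ w.2.1} :=
      isClosed_le continuous_const (continuous_fst.comp continuous_snd)
    have h3 : IsClosed {w : ℝ × ℝ × ℝ | 0 ≤ w.2.2} :=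
      isClosed_le continuous_const (continuous_snd.comp continuous_snd)
    have h4 : IsClosed {w : ℝ × ℝ × ℝ | w.1 + w.2.1 + w.2.2 = 1} :=
      isClosed_eq (by fun_prop) continuous_const
    have : Δ = ({w : ℝ × ℝ × ℝ | 0 ≤ w.1} ∩ {w | 0 ≤ w.2.1}) ∩
        ({w | 0 ≤ w.2.2} ∩ {w | w.1 + w.2.1 + w.2.2 = 1}) := by
      ext w; simp [hΔ]; tauto
    rw [this]
    exact (h1.inter h2).inter (h3.inter h4)
  have hΔcpt : IsCompact Δ := by
    refine (isCompact_Icc (a := ((0:ℝ), (0:ℝ), (0:ℝ))) (b := (1, 1, 1))).of_isClosed_subset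
      hΔcl ?_
    rintro ⟨w1, w2, w3⟩ ⟨h1, h2, h3, h4⟩
    simp only [Set.mem_Icc, Prod.le_def] at *
    refine ⟨⟨h1, h2, h3⟩, by linarith, by linarith, by linarith⟩
  have hK : IsCompact ((fun x : (ℝ × ℝ × ℝ) × (ℝ × ℝ) × (ℝ × ℝ) × (ℝ × ℝ) =>
      x.1.1 • x.2.1 + x.1.2.1 • x.2.2.1 + x.1.2.2 • x.2.2.2) ''
      (Δ ×ˢ S ×ˢ S ×ˢ S)) :=
    (hΔcpt.prod (hS.prod (hS.prod hS))).image (by fun_prop)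
  have heq : convexHull ℝ S = (fun x : (ℝ × ℝ × ℝ) × (ℝ × ℝ) × (ℝ × ℝ) × (ℝ × ℝ) =>
      x.1.1 • x.2.1 + x.1.2.1 • x.2.2.1 + x.1.2.2 • x.2.2.2) '' (Δ ×ˢ S ×ˢ S ×ˢ S) := by
    ext z
    constructor
    · intro hz
      obtain ⟨p, hp, q, hq, r, hr, α, β, γ, hα, hβ, hγ, hsum, hcombo⟩ := hull_three hz
      exact ⟨((α, β, γ), p, q, r), ⟨⟨hα, hβ, hγ, hsum⟩, hp, hq, hr⟩, hcombo⟩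
    · rintro ⟨⟨⟨α, β, γ⟩, p, q, r⟩, ⟨⟨hα, hβ, hγ, hsum⟩, hp, hq, hr⟩, rfl⟩
      exact combo_mem hp hq hr hα hβ hγ hsum
  rw [heq]
  exact hK

private lemma usc_bddAbove {g : ℝ → EReal} (hg : UpperSemicontinuous g) {a b : ℝ}
    (hd : {x : ℝ | g x ≠ ⊥} = Set.Icc a b) (ht : ∀ x, g x ≠ ⊤) :
    ∃ M : ℝ, ∀ x, g x ≤ (M : EReal) := by
  have hcov : ∀ x : ℝ, ∃ r : ℝ, g x < (r : EReal) := by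
    intro x
    obtain ⟨r, h1, _⟩ := EReal.exists_between_coe_real (lt_top_iff_ne_top.mpr (ht x))
    exact ⟨r, h1⟩
  choose r hr using hcov
  obtain ⟨t, _, hcover⟩ := (isCompact_Icc (a := a) (b := b)).elim_nhds_subcover
    (fun x => {y | g y < (r x : EReal)}) (fun x _ => hg x _ (hr x))
  obtain ⟨M, hM⟩ := (t.image r).exists_le
  refine ⟨M, fun x => ?_⟩
  by_cases hx : x ∈ Set.Icc a b
  · obtain ⟨x₀, hx₀t, hx₀⟩ := Set.mem_iUnion₂.mp (hcover hx)
    exact le_trans (le_of_lt hx₀)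
      (EReal.coe_le_coe_iff.mpr (hM _ (Finset.mem_image_of_mem r hx₀t)))
  · have hb : g x = ⊥ := by
      by_contra h
      exact hx (hd ▸ (h : x ∈ {x | g x ≠ ⊥}))
    simp [hb]

private lemma conc_lower {g : ℝ → EReal} (hg : ConcaveE g) {a b : ℝ} (hab : a ≤ b)
    (hd : {x : ℝ | g x ≠ ⊥} = Set.Icc a b) (ht : ∀ x, g x ≠ ⊤) :
    ∃ c : ℝ, ∀ x ∈ Set.Icc a b, (c : EReal) ≤ g x := by
  have hga : g a ≠ ⊥ := by
    have : a ∈ {x : ℝ | g x ≠ ⊥} := hd ▸ Set.mem_Icc.mpr ⟨le_refl a, hab⟩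
    exact this
  have hgb : g b ≠ ⊥ := by
    have : b ∈ {x : ℝ | g x ≠ ⊥} := hd ▸ Set.mem_Icc.mpr ⟨hab, le_refl b⟩
    exact this
  set va := (g a).toReal with hva
  set vb := (g b).toReal with hvb
  refine ⟨min va vb, fun x hx => ?_⟩
  obtain ⟨θ, hθ0, hθ1, hmid⟩ := exists_theta hx.1 hx.2
  have hcc := hg a b θ hθ0 hθ1
  rw [← hmid] at hcc
  have hlhs : (θ : EReal) * g a + ((1 - θ : ℝ) : EReal) * g b =
      ((θ * va + (1 - θ) * vb : ℝ) : EReal) := by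
    rw [← EReal.coe_toReal (ht a) hga, ← EReal.coe_toReal (ht b) hgb, ← hva, ← hvb]
    rw [← EReal.coe_mul, ← EReal.coe_mul, ← EReal.coe_add]
  rw [hlhs] at hcc
  refine le_trans ?_ hcc
  rw [EReal.coe_le_coe_iff]
  nlinarith [mul_le_mul_of_nonneg_left (min_le_left va vb) hθ0,
    mul_le_mul_of_nonneg_left (min_le_right va vb) (by linarith : (0:ℝ) ≤ 1 - θ)]

private lemma usc_hypo_closed {g : ℝ → EReal} (hg : UpperSemicontinuous g) :
    IsClosed {p : ℝ × ℝ | (p.2 : EReal) ≤ g p.1} := by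
  rw [← isOpen_compl_iff, isOpen_iff_mem_nhds]
  rintro ⟨x, v⟩ hxv
  simp only [Set.mem_compl_iff, Set.mem_setOf_eq, not_le] at hxv
  obtain ⟨y, h1, h2⟩ := EReal.exists_between_coe_real hxv
  have hev : {z : ℝ | g z < (y : EReal)} ∈ 𝓝 x := hg x _ h1
  have hIoi : Set.Ioi y ∈ 𝓝 v := Ioi_mem_nhds (by exact_mod_cast h2)
  have hprod := Filter.prod_mem_prod hev hIoi
  rw [← nhds_prod_eq] at hprod
  apply Filter.mem_of_superset hprod
  rintro ⟨z, w⟩ ⟨hz, hw⟩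
  simp only [Set.mem_compl_iff, Set.mem_setOf_eq, not_le]
  exact lt_trans hz (by exact_mod_cast (Set.mem_Ioi.mp hw) : (y : EReal) < (w : EReal))


/-- Two-point representation of the upper concave envelope of finitely many
one-dimensional concave functions with compact interval domains: at every point of
its domain, the envelope value is attained by a convex combination of at most two
points drawn from at most two of the functions. -/
theorem uce_two_point_representation (k : ℕ) (f : Fin k → ℝ → EReal)
    (hconc : ∀ i, ConcaveE (f i))
    (hdom : ∀ i, ∃ a b : ℝ, a ≤ b ∧ {x : ℝ | f i x ≠ ⊥} = Set.Icc a b)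
    (hreal : ∀ i x, f i x ≠ ⊤)
    (husc : ∀ i, UpperSemicontinuous (f i)) :
    ∀ μ : ℝ, concE (fun x => ⨆ i, f i x) μ ≠ ⊥ →
      ∃ (i j : Fin k) (t μ' μ'' : ℝ), 0 ≤ t ∧ t ≤ 1 ∧
        f i μ' ≠ ⊥ ∧ f j μ'' ≠ ⊥ ∧ t * μ' + (1 - t) * μ'' = μ ∧
        concE (fun x => ⨆ i, f i x) μ =
          (t : EReal) * f i μ' + ((1 - t : ℝ) : EReal) * f j μ'' := by
  classical
  intro μ hμ
  choose a b hab hIcc using hdom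
  choose cc hcc using fun i => conc_lower (hconc i) (hab i) (hIcc i) (hreal i)
  obtain ⟨cneg, hcneg⟩ : ∃ c : ℝ, ∀ i, c ≤ cc i := by
    obtain ⟨m, hm⟩ := (Finset.univ.image (fun i => -cc i)).exists_le
    exact ⟨-m, fun i => by
      have := hm _ (Finset.mem_image_of_mem _ (Finset.mem_univ i)); linarith⟩
  set S : Set (ℝ × ℝ) := ⋃ i, {p : ℝ × ℝ | p.1 ∈ Set.Icc (a i) (b i) ∧ cneg ≤ p.2 ∧
    (p.2 : EReal) ≤ f i p.1} with hS
  have hScpt : IsCompact S := by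
    apply isCompact_iUnion
    intro i
    obtain ⟨M, hM⟩ := usc_bddAbove (husc i) (hIcc i) (hreal i)
    refine (isCompact_Icc (a := ((a i), cneg)) (b := ((b i), M))).of_isClosed_subset ?_ ?_
    · have h1 : IsClosed {p : ℝ × ℝ | p.1 ∈ Set.Icc (a i) (b i)} :=
        isClosed_Icc.preimage continuous_fst
      have h2 : IsClosed {p : ℝ × ℝ | cneg ≤ p.2} := isClosed_le continuous_const continuous_snd
      have h3 := usc_hypo_closed (husc i)
      have heq : {p : ℝ × ℝ | p.1 ∈ Set.Icc (a i) (b i) ∧ cneg ≤ p.2 ∧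
          (p.2 : EReal) ≤ f i p.1} = {p : ℝ × ℝ | p.1 ∈ Set.Icc (a i) (b i)} ∩
          ({p : ℝ × ℝ | cneg ≤ p.2} ∩ {p : ℝ × ℝ | (p.2 : EReal) ≤ f i p.1}) := by
        ext p; simp only [Set.mem_setOf_eq, Set.mem_inter_iff]
      rw [heq]
      exact h1.inter (h2.inter h3)
    · rintro ⟨x, v⟩ ⟨hx, hv1, hv2⟩
      have hvM : v ≤ M := by
        have := le_trans hv2 (hM x)
        exact_mod_cast this
      simp only [Set.mem_Icc, Prod.le_def]
      exact ⟨⟨hx.1, hv1⟩, hx.2, hvM⟩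
  set H : Set (ℝ × ℝ) := convexHull ℝ S with hH
  have hHcpt : IsCompact H := hull_compact hScpt
  have hdomne : ∀ i x, x ∈ Set.Icc (a i) (b i) → f i x ≠ ⊥ := by
    intro i x hx
    have : x ∈ {x : ℝ | f i x ≠ ⊥} := (hIcc i) ▸ hx
    exact this
  have hgraph : ∀ i x, x ∈ Set.Icc (a i) (b i) → (x, (f i x).toReal) ∈ S := by
    intro i x hx
    have hnb := hdomne i x hx
    refine Set.mem_iUnion.mpr ⟨i, hx, ?_, ?_⟩
    · have h1 := hcc i x hx
      rw [← EReal.coe_toReal (hreal i x) hnb] at h1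
      have := EReal.coe_le_coe_iff.mp h1
      linarith [hcneg i]
    · rw [EReal.coe_toReal (hreal i x) hnb]
  set fib : ℝ → Set ℝ := fun x => {v : ℝ | (x, v) ∈ H} with hfib
  set G : ℝ → EReal := fun x => sSup ((fun v : ℝ => (v : EReal)) '' fib x) with hG
  have hfibc : ∀ x, IsCompact (fib x) := by
    intro x
    have heq : fib x = Prod.snd '' (H ∩ {p : ℝ × ℝ | p.1 = x}) := by
      ext v
      constructor
      · intro hv; exact ⟨(x, v), ⟨hv, rfl⟩, rfl⟩
      · rintro ⟨pp, ⟨hw, hy⟩, rfl⟩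
        have hpe : pp = (x, pp.2) := Prod.ext_iff.mpr ⟨hy, rfl⟩
        exact hpe ▸ hw
    rw [heq]
    exact ((hHcpt.inter_right (isClosed_eq continuous_fst continuous_const)).image
      continuous_snd)
  have hGval : ∀ x v, IsGreatest (fib x) v → G x = (v : EReal) := by
    intro x v hv
    apply IsGreatest.csSup_eq
    constructor
    · exact Set.mem_image_of_mem _ hv.1
    · rintro w ⟨w', hw', rfl⟩
      exact EReal.coe_le_coe_iff.mpr (hv.2 hw')
  have hGconc : ConcaveE G := by
    intro x y t ht0 ht1
    rcases eq_or_lt_of_le ht0 with h0 | h0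
    · rw [← h0]
      simp only [EReal.coe_zero, zero_mul, sub_zero, EReal.coe_one, one_mul, zero_add]
      norm_num
    rcases eq_or_lt_of_le ht1 with h1 | h1
    · rw [h1]
      simp only [EReal.coe_one, one_mul, sub_self, EReal.coe_zero, zero_mul, add_zero]
      norm_num
    rcases Set.eq_empty_or_nonempty (fib x) with hex | hex
    · have hbot : G x = ⊥ := by rw [hG]; simp [hex]
      rw [hbot, EReal.mul_bot_of_pos (by exact_mod_cast h0), EReal.bot_add]
      exact bot_le
    rcases Set.eq_empty_or_nonempty (fib y) with hey | hey
    · have hbot : G y = ⊥ := by rw [hG]; simp [hey]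
      rw [hbot, EReal.mul_bot_of_pos (by exact_mod_cast (by linarith : (0:ℝ) < 1 - t)),
        EReal.add_bot]
      exact bot_le
    obtain ⟨vx, hvx⟩ := (hfibc x).exists_isGreatest hex
    obtain ⟨vy, hvy⟩ := (hfibc y).exists_isGreatest hey
    rw [hGval x vx hvx, hGval y vy hvy]
    have hmem : t * vx + (1 - t) * vy ∈ fib (t * x + (1 - t) * y) := by
      have hcvx := (convex_convexHull ℝ S) hvx.1 hvy.1 ht0 (by linarith : (0:ℝ) ≤ 1 - t)
        (by ring)
      have heq : t • ((x, vx) : ℝ × ℝ) + (1 - t) • ((y, vy) : ℝ × ℝ) =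
          (t * x + (1 - t) * y, t * vx + (1 - t) * vy) := by
        simp [Prod.smul_def, smul_eq_mul, Prod.mk_add_mk]
      rw [heq] at hcvx
      exact hcvx
    calc (t : EReal) * (vx : EReal) + ((1 - t : ℝ) : EReal) * (vy : EReal)
        = ((t * vx + (1 - t) * vy : ℝ) : EReal) := by
          rw [← EReal.coe_mul, ← EReal.coe_mul, ← EReal.coe_add]
      _ ≤ G (t * x + (1 - t) * y) := le_sSup (Set.mem_image_of_mem _ hmem)
  have hGmaj : ∀ x, (⨆ i, f i x) ≤ G x := by
    intro x
    apply iSup_le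
    intro i
    by_cases hbot : f i x = ⊥
    · simp [hbot]
    · have hxI : x ∈ Set.Icc (a i) (b i) := (hIcc i) ▸ (hbot : x ∈ {x : ℝ | f i x ≠ ⊥})
      have hmem : (f i x).toReal ∈ fib x := subset_convexHull ℝ S (hgraph i x hxI)
      calc f i x = (((f i x).toReal : ℝ) : EReal) := (EReal.coe_toReal (hreal i x) hbot).symm
        _ ≤ G x := le_sSup (Set.mem_image_of_mem _ hmem)
  have hFG : concE (fun x => ⨆ i, f i x) μ ≤ G μ :=
    iInf_le (fun h : {h : ℝ → EReal // ConcaveE h ∧ ∀ x, (⨆ i, f i x) ≤ h x} =>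
      (h : ℝ → EReal) μ) ⟨G, hGconc, hGmaj⟩
  have hfibne : (fib μ).Nonempty := by
    rcases Set.eq_empty_or_nonempty (fib μ) with he | hne
    · exfalso
      apply hμ
      have : G μ = ⊥ := by rw [hG]; simp [he]
      exact le_bot_iff.mp (this ▸ hFG)
    · exact hne
  obtain ⟨V, hV⟩ := (hfibc μ).exists_isGreatest hfibne
  obtain ⟨p, hp, q, hq, r, hr, α, β, γ, hα, hβ, hγ, hsum, hcombo⟩ := hull_three hV.1
  have hc1 : α * p.1 + β * q.1 + γ * r.1 = μ := by
    have := congrArg Prod.fst hcombo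
    simpa using this
  have hc2 : α * p.2 + β * q.2 + γ * r.2 = V := by
    have := congrArg Prod.snd hcombo
    simpa using this
  obtain ⟨u, v, hu, hv, s, hs0, hs1, hx, hval⟩ := reduce3 p q r α β γ hα hβ hγ hsum
  rw [hc1] at hx
  rw [hc2] at hval
  have huS : u ∈ S := by rcases hu with rfl | rfl | rfl <;> assumption
  have hvS : v ∈ S := by rcases hv with rfl | rfl | rfl <;> assumption
  obtain ⟨i, hui⟩ := Set.mem_iUnion.mp huS
  obtain ⟨j, hvj⟩ := Set.mem_iUnion.mp hvS
  obtain ⟨hui1, hui2, hui3⟩ := hui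
  obtain ⟨hvj1, hvj2, hvj3⟩ := hvj
  have hne1 : f i u.1 ≠ ⊥ := hdomne i u.1 hui1
  have hne2 : f j v.1 ≠ ⊥ := hdomne j v.1 hvj1
  set t1 := (f i u.1).toReal with ht1
  set t2 := (f j v.1).toReal with ht2
  have hu2t : u.2 ≤ t1 := by
    rw [ht1]
    have := hui3
    rw [← EReal.coe_toReal (hreal i u.1) hne1] at this
    exact_mod_cast this
  have hv2t : v.2 ≤ t2 := by
    rw [ht2]
    have := hvj3
    rw [← EReal.coe_toReal (hreal j v.1) hne2] at this
    exact_mod_cast this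
  set W := s * t1 + (1 - s) * t2 with hW
  have hWV : V ≤ W := by
    refine le_trans hval ?_
    have h1 := mul_le_mul_of_nonneg_left hu2t hs0
    have h2 := mul_le_mul_of_nonneg_left hv2t (by linarith : (0:ℝ) ≤ 1 - s)
    rw [hW]; linarith
  have hWmem : W ∈ fib μ := by
    have h1 := subset_convexHull ℝ S (hgraph i u.1 hui1)
    have h2 := subset_convexHull ℝ S (hgraph j v.1 hvj1)
    have hcvx := (convex_convexHull ℝ S) h1 h2 hs0 (by linarith : (0:ℝ) ≤ 1 - s) (by ring)
    have heq : s • ((u.1, t1) : ℝ × ℝ) + (1 - s) • ((v.1, t2) : ℝ × ℝ) = (μ, W) := by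
      simp only [Prod.smul_def, smul_eq_mul, Prod.mk_add_mk, Prod.mk.injEq]
      exact ⟨hx, hW.symm⟩
    rw [heq] at hcvx
    exact hcvx
  have hWeq : W = V := le_antisymm (hV.2 hWmem) hWV
  refine ⟨i, j, s, u.1, v.1, hs0, hs1, hne1, hne2, hx, ?_⟩
  have hrhs : (s : EReal) * f i u.1 + ((1 - s : ℝ) : EReal) * f j v.1 = ((W : ℝ) : EReal) := by
    rw [← EReal.coe_toReal (hreal i u.1) hne1, ← EReal.coe_toReal (hreal j v.1) hne2,
      ← ht1, ← ht2, ← EReal.coe_mul, ← EReal.coe_mul, ← EReal.coe_add, hW]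
  rw [hrhs]
  apply le_antisymm
  · refine le_trans hFG ?_
    rw [hGval μ V hV, hWeq]
  · apply le_iInf
    rintro ⟨h, hhc, hhm⟩
    rw [← hrhs]
    calc (s : EReal) * f i u.1 + ((1 - s : ℝ) : EReal) * f j v.1
        ≤ (s : EReal) * h u.1 + ((1 - s : ℝ) : EReal) * h v.1 := by
          apply add_le_add
          · exact mul_le_mul_of_nonneg_left
              (le_trans (le_iSup (fun i' => f i' u.1) i) (hhm u.1))
              (by exact_mod_cast hs0)
          · exact mul_le_mul_of_nonneg_left
              (le_trans (le_iSup (fun i' => f i' v.1) j) (hhm v.1))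
              (by exact_mod_cast (by linarith : (0:ℝ) ≤ 1 - s))
      _ ≤ h (s * u.1 + (1 - s) * v.1) := hhc u.1 v.1 s hs0 hs1
      _ = h μ := by rw [hx]
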